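/- Any F_q-linear subspace C of the space of m × n matrices over F_q in which every nonzero matrix has rank at least δ satisfies dim_{F_q}(C) ≤ max{m, n}·(min{m, n} − δ + 1). -/

import Mathlib

open Module

private lemma aux_rank_bound {F : Type*} [Field F] (m n δ : ℕ)
    (C : Submodule F (Matrix (Fin m) (Fin n) F))
    (hC : ∀ A ∈ C, A ≠ 0 → δ ≤ A.rank) :
    finrank F C ≤ n * (m - δ + 1) := by
  rcases Nat.eq_zero_or_pos δ with h0 | hδ
  · subst h0
    calc finrank F C ≤ finrank F (Matrix (Fin m) (Fin n) F) := Submodule.finrank_le C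
      _ = m * n := by simp [Module.finrank_matrix]
      _ ≤ n * (m - 0 + 1) := by rw [Nat.sub_zero, mul_comm]; exact Nat.mul_le_mul_left n (Nat.le_succ m)
  by_cases hm : m < δ
  · -- C is trivial
    have : ∀ A ∈ C, A = 0 := by
      intro A hA
      by_contra h
      have h1 := hC A hA h
      have h2 : A.rank ≤ m := Matrix.rank_le_height A
      omega
    have : C = ⊥ := by
      ext A; simp only [Submodule.mem_bot]
      exact ⟨fun h => this A h, fun h => h ▸ C.zero_mem⟩
    rw [this, finrank_bot]
    exact Nat.zero_le _
  push_neg at hm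
  set r := m - δ + 1 with hr
  have hrm : r ≤ m := by omega
  -- projection keeping the first r rows
  let π : Matrix (Fin m) (Fin n) F →ₗ[F] Matrix (Fin r) (Fin n) F :=
    { toFun := fun A => A.submatrix (Fin.castLE hrm) id
      map_add' := fun A B => rfl
      map_smul' := fun c A => rfl }
  have hinj : Function.Injective (π.comp C.subtype) := by
    rw [← LinearMap.ker_eq_bot]
    rw [Submodule.eq_bot_iff]
    rintro ⟨A, hA⟩ hker
    simp only [LinearMap.mem_ker, LinearMap.comp_apply, Submodule.subtype_apply] at hker
    apply Subtype.ext
    show A = 0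
    by_contra hA0
    have hδA := hC A hA hA0
    -- A vanishes on rows < r, so A = E * B with B the bottom δ - 1 rows
    have hzero : ∀ (i : Fin m), (i : ℕ) < r → ∀ j, A i j = 0 := by
      intro i hi j
      have := congrFun (congrFun hker ⟨i, hi⟩) j
      simpa [π, Matrix.submatrix] using this
    set B : Matrix (Fin (δ - 1)) (Fin n) F := fun k j => A ⟨r + k, by omega⟩ j with hB
    set E : Matrix (Fin m) (Fin (δ - 1)) F := fun i k => if (i : ℕ) = r + k then 1 else 0 with hE
    have hAEB : A = E * B := by
      ext i j
      rw [Matrix.mul_apply]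
      by_cases hi : (i : ℕ) < r
      · rw [hzero i hi j]
        symm
        apply Finset.sum_eq_zero
        intro k _
        have : (i : ℕ) ≠ r + k := by omega
        simp [hE, this]
      · push_neg at hi
        have hik : (i : ℕ) - r < δ - 1 := by omega
        rw [Finset.sum_eq_single ⟨(i : ℕ) - r, hik⟩]
        · have h1 : (i : ℕ) = r + ((i : ℕ) - r) := by omega
          simp only [hE, hB]
          rw [if_pos h1, one_mul]
          congr 1
          exact Fin.ext h1
        · intro k _ hk
          have : (i : ℕ) ≠ r + k := by
            intro h
            apply hk
            apply Fin.ext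
            simp; omega
          simp [hE, this]
        · intro h; exact absurd (Finset.mem_univ _) h
    have : A.rank ≤ δ - 1 := by
      calc A.rank = (E * B).rank := by rw [hAEB]
        _ ≤ B.rank := Matrix.rank_mul_le_right E B
        _ ≤ Fintype.card (Fin (δ - 1)) := Matrix.rank_le_card_height B
        _ = δ - 1 := Fintype.card_fin _
    omega
  calc finrank F C ≤ finrank F (Matrix (Fin r) (Fin n) F) :=
        LinearMap.finrank_le_finrank_of_injective hinj
    _ = r * n := by simp [Module.finrank_matrix]
    _ = n * (m - δ + 1) := by rw [mul_comm]

theorem stmt_5 {F : Type*} [Field F] [Fintype F] (m n δ : ℕ)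
    (C : Submodule F (Matrix (Fin m) (Fin n) F))
    (hC : ∀ A ∈ C, A ≠ 0 → δ ≤ A.rank) :
    finrank F C ≤ max m n * (min m n - δ + 1) := by
  rcases le_total m n with hmn | hmn
  · rw [max_eq_right hmn, min_eq_left hmn]
    exact aux_rank_bound m n δ C hC
  · rw [max_eq_left hmn, min_eq_right hmn]
    let e := Matrix.transposeLinearEquiv (Fin m) (Fin n) F F
    have key := aux_rank_bound n m δ (C.map e.toLinearMap) ?_
    · rw [(e.submoduleMap C).finrank_eq]
      exact key
    · rintro A hA hA0
      rw [Submodule.mem_map] at hA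
      obtain ⟨B, hB, rfl⟩ := hA
      show δ ≤ (Matrix.transpose B).rank
      rw [Matrix.rank_transpose]
      refine hC B hB fun h => hA0 ?_
      rw [h]
      exact map_zero _
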